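/- Let p be a prime, m, n natural numbers, and write (x_1 + ... + x_n)^{p^m} = Σ_{i_1+...+i_n = p^m} a_{i_1,...,i_n} x_1^{i_1} ... x_n^{i_n} with multinomial coefficients a_{i_1,...,i_n} = p^m! / (i_1! ... i_n!). Then for every j with i_j > 0, v_p(a_{i_1,...,i_n}) + v_p(i_j) ≥ m, where v_p is the p-adic valuation. -/
import Mathlib

open Nat Finset in
/-- For the multinomial coefficients `a_{i₁,…,iₙ} = (p^m)! / (i₁! ⋯ iₙ!)` appearing in
`(x₁ + ⋯ + xₙ)^(p^m) = ∑ a_{i₁,…,iₙ} x₁^{i₁} ⋯ xₙ^{iₙ}`, for every `j` with `i_j > 0` one has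
`v_p(a_{i₁,…,iₙ}) + v_p(i_j) ≥ m`. -/
theorem stmt_18 (p m n : ℕ) (hp : p.Prime) (i : Fin n → ℕ)
    (hsum : ∑ j, i j = p ^ m) (j : Fin n) (hj : 0 < i j) :
    m ≤ padicValNat p (Nat.multinomial Finset.univ i) + padicValNat p (i j) := by
  haveI := Fact.mk hp
  set i' : Fin n → ℕ := Function.update i j (i j - 1) with hi'
  have hsum' : ∑ k, i' k = p ^ m - 1 := by
    rw [hi', Finset.sum_update_of_mem (mem_univ j), Finset.sdiff_singleton_eq_erase]
    have := hsum
    rw [← Finset.sum_erase_add _ _ (mem_univ j)] at this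
    omega
  -- key identity : i j * multinomial i = p^m * multinomial i'
  have hprod : (∏ k, (i k)!) = i j * ∏ k, (i' k)! := by
    rw [← Finset.mul_prod_erase _ _ (mem_univ j), ← Finset.mul_prod_erase _ _ (mem_univ j)]
    have h1 : (i j)! = i j * (i' j)! := by
      rw [hi', Function.update_self]
      cases' Nat.exists_eq_succ_of_ne_zero hj.ne' with t ht
      rw [ht, Nat.succ_sub_one, Nat.factorial_succ]
    rw [h1]
    have h2 : ∏ k ∈ univ.erase j, (i k)! = ∏ k ∈ univ.erase j, (i' k)! := by
      apply Finset.prod_congr rfl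
      intro k hk
      rw [hi', Function.update_of_ne (Finset.ne_of_mem_erase hk)]
    rw [h2]; ring
  have spec1 := Nat.multinomial_spec Finset.univ i
  have spec2 := Nat.multinomial_spec Finset.univ i'
  rw [hsum] at spec1
  rw [hsum'] at spec2
  have hpm : 0 < p ^ m := pow_pos hp.pos m
  have hfact : (p ^ m)! = p ^ m * (p ^ m - 1)! := by
    cases' Nat.exists_eq_succ_of_ne_zero hpm.ne' with t ht
    rw [ht, Nat.succ_sub_one, Nat.factorial_succ]
  have key : i j * Nat.multinomial Finset.univ i = p ^ m * Nat.multinomial Finset.univ i' := by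
    have hpos : 0 < ∏ k, (i' k)! := Finset.prod_pos fun k _ => Nat.factorial_pos _
    apply Nat.eq_of_mul_eq_mul_left hpos
    calc (∏ k, (i' k)!) * (i j * Nat.multinomial Finset.univ i)
        = i j * ((∏ k, (i' k)!) * Nat.multinomial Finset.univ i) := by ring
      _ = (∏ k, (i k)!) * Nat.multinomial Finset.univ i := by rw [hprod]; ring
      _ = (p ^ m)! := spec1
      _ = p ^ m * ((∏ k, (i' k)!) * Nat.multinomial Finset.univ i') := by
          rw [spec2, hfact]
      _ = (∏ k, (i' k)!) * (p ^ m * Nat.multinomial Finset.univ i') := by ring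
  have hm1 : Nat.multinomial Finset.univ i ≠ 0 := (Nat.multinomial_pos _ _).ne'
  have hm2 : Nat.multinomial Finset.univ i' ≠ 0 := (Nat.multinomial_pos _ _).ne'
  have hv : padicValNat p (i j) + padicValNat p (Nat.multinomial Finset.univ i)
      = m + padicValNat p (Nat.multinomial Finset.univ i') := by
    have := congrArg (padicValNat p) key
    rwa [padicValNat.mul hj.ne' hm1, padicValNat.mul (pow_ne_zero m hp.pos.ne') hm2,
      padicValNat.prime_pow] at this
  omega
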